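/- Let a, m, b > 0 with a/m > 2(b + sqrt(1+b²)), and let V_1 = (a/m − sqrt((a/m)² − 4(1+(a/m)b)))/(2(1+(a/m)b)). Then V_1 < −b + sqrt(1+b²), and consequently the determinant m(−1 + 2bV_1 + V_1²)/(1 − bV_1) of the associated Jacobian is negative, so the steady state (U_1,V_1) is linearly unstable. -/

import Mathlib

private lemma aux_qb (b q : ℝ) (hb : 0 < b) (hq0 : 0 < q) (hq2 : q ^ 2 = 1 + b ^ 2) :
    b < q := by nlinarith

private lemma aux_D (b q s : ℝ) (hb : 0 < b) (hq0 : 0 < q) (hq2 : q ^ 2 = 1 + b ^ 2)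
    (h : 2 * (b + q) < s) : 0 < s ^ 2 - 4 * (1 + s * b) := by
  nlinarith [mul_pos (show (0:ℝ) < s - 2*b - 2*q + (2*q - 2*b) by nlinarith) hq0]

private lemma aux_sqDlt (s sqD c : ℝ) (hc : 0 < c) (h2 : sqD ^ 2 = s ^ 2 - 4 * c)
    (h0 : 0 ≤ sqD) (hs : 0 < s) : sqD < s := by nlinarith

private lemma aux_gt (s sqD c r : ℝ) (hc : 0 < c) (hr0 : 0 < r)
    (hkey : c * r ^ 2 - s * r + 1 < 0) (h2 : sqD ^ 2 = s ^ 2 - 4 * c) (h0 : 0 < sqD) :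
    s - 2 * c * r < sqD := by
  rcases le_or_gt (s - 2 * c * r) 0 with hle | hpos
  · linarith
  · nlinarith [mul_neg_of_pos_of_neg hc hkey]

private lemma aux_num (b r V1 : ℝ) (hb : 0 < b) (hr0 : 0 < r) (hV1pos : 0 < V1)
    (hV1r : V1 < r) (hrq : r ^ 2 + 2 * b * r - 1 = 0) :
    -1 + 2 * b * V1 + V1 ^ 2 < 0 := by
  nlinarith [mul_pos (sub_pos.2 hV1r) (show 0 < V1 + r + 2 * b by linarith)]

private lemma aux_den (b q V1 : ℝ) (hb : 0 < b) (hq0 : 0 < q) (hqb : b < q)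
    (hq2 : q ^ 2 = 1 + b ^ 2) (hV1pos : 0 < V1) (hV1r : V1 < q - b) :
    0 < 1 - b * V1 := by
  nlinarith [mul_lt_mul_of_pos_left hV1r hb, mul_lt_mul_of_pos_right hqb hq0]

private lemma aux_disc (t d : ℝ) (hd : d < 0) : 0 ≤ t ^ 2 - 4 * d := by
  nlinarith [sq_nonneg t]

private lemma aux_mu (t S d : ℝ) (hd : d < 0) (hS2 : S ^ 2 = t ^ 2 - 4 * d)
    (hS0 : 0 ≤ S) : 0 < (t + S) / 2 := by
  nlinarith [sq_nonneg (S + t)]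

set_option maxHeartbeats 1000000 in
/-- For `a/m > 2(b + √(1+b²))`, the smaller vegetated steady state has
`V₁ < -b + √(1+b²)`; consequently the determinant
`m(-1 + 2bV₁ + V₁²)/(1 - bV₁)` of the Jacobian is negative, so the Jacobian has a
positive real eigenvalue and `(U₁,V₁)` is linearly unstable. -/
theorem stmt_17 (a m b : ℝ) (ha : 0 < a) (hm : 0 < m) (hb : 0 < b)
    (h : 2 * (b + Real.sqrt (1 + b ^ 2)) < a / m) :
    let V1 : ℝ := (a / m - Real.sqrt ((a / m) ^ 2 - 4 * (1 + (a / m) * b))) /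
      (2 * (1 + (a / m) * b))
    let U1 : ℝ := m * (a / m - V1 / (1 - b * V1))
    let M : Matrix (Fin 2) (Fin 2) ℝ :=
      !![-1 - V1 ^ 2, -2 * U1 * V1;
         (1 - b * V1) * V1 ^ 2, -m + (2 - 3 * b * V1) * U1 * V1]
    V1 < -b + Real.sqrt (1 + b ^ 2) ∧
    m * (-1 + 2 * b * V1 + V1 ^ 2) / (1 - b * V1) < 0 ∧
    ∃ μ : ℝ, 0 < μ ∧ μ ∈ spectrum ℝ M := by
  intro V1 U1 M
  have hV1def : V1 = (a / m - Real.sqrt ((a / m) ^ 2 - 4 * (1 + (a / m) * b))) /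
      (2 * (1 + (a / m) * b)) := rfl
  have hU1 : U1 = m * (a / m - V1 / (1 - b * V1)) := rfl
  have hM : M = !![-1 - V1 ^ 2, -2 * U1 * V1;
      (1 - b * V1) * V1 ^ 2, -m + (2 - 3 * b * V1) * U1 * V1] := rfl
  clear_value M U1 V1
  set s : ℝ := a / m with hsdef
  clear_value s
  have hs0 : 0 < s := hsdef ▸ div_pos ha hm
  set q : ℝ := Real.sqrt (1 + b ^ 2) with hqdef
  clear_value q
  have hq2 : q ^ 2 = 1 + b ^ 2 := hqdef ▸ Real.sq_sqrt (by positivity)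
  have hq0 : 0 < q := hqdef ▸ Real.sqrt_pos.2 (by positivity)
  have hqb : b < q := aux_qb b q hb hq0 hq2
  have hc : 0 < 1 + s * b := by positivity
  have hD : 0 < s ^ 2 - 4 * (1 + s * b) := aux_D b q s hb hq0 hq2 h
  set sqD : ℝ := Real.sqrt (s ^ 2 - 4 * (1 + s * b)) with hsqDdef
  have hsqD2 : sqD ^ 2 = s ^ 2 - 4 * (1 + s * b) := hsqDdef ▸ Real.sq_sqrt hD.le
  have hsqD0 : 0 < sqD := hsqDdef ▸ Real.sqrt_pos.2 hD
  clear_value sqD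
  have hV1 : V1 = (s - sqD) / (2 * (1 + s * b)) := hV1def
  have hV1' : V1 * (2 * (1 + s * b)) = s - sqD := by
    rw [hV1]; exact div_mul_cancel₀ _ (by positivity : (0:ℝ) < 2 * (1 + s * b)).ne'
  have hsqDlt : sqD < s := aux_sqDlt s sqD (1 + s * b) hc hsqD2 hsqD0.le hs0
  have hV1pos : 0 < V1 := by
    rw [hV1]; exact div_pos (by linarith) (by positivity)
  -- quadratic relation
  have hquad : (1 + s * b) * V1 ^ 2 - s * V1 + 1 = 0 := by
    have h4 : 4 * (1 + s * b) * ((1 + s * b) * V1 ^ 2 - s * V1 + 1) = 0 := by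
      linear_combination (2 * (1 + s * b) * V1 - s - sqD) * hV1' + hsqD2
    rcases mul_eq_zero.1 h4 with h' | h'
    · exfalso; linarith
    · exact h'
  set r : ℝ := q - b with hrdef
  clear_value r
  have hr0 : 0 < r := by rw [hrdef]; linarith
  have hr2 : r ^ 2 + 1 = 2 * q * r := by rw [hrdef]; linear_combination -hq2
  have hbr : b * r - 1 = -(q * r) := by rw [hrdef]; linear_combination hq2
  have hsr : 2 < s * r := by
    have h1 : 2 * (b + q) * r = 2 := by rw [hrdef]; linear_combination 2 * hq2
    have h2 : 2 * (b + q) * r < s * r := mul_lt_mul_of_pos_right h hr0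
    linarith
  have hkey : (1 + s * b) * r ^ 2 - s * r + 1 < 0 := by
    have hid : (1 + s * b) * r ^ 2 - s * r + 1 = q * r * (2 - s * r) := by
      linear_combination hr2 + s * r * hbr
    rw [hid]
    exact mul_neg_of_pos_of_neg (mul_pos hq0 hr0) (by linarith)
  have hV1r : V1 < r := by
    have hgt : s - 2 * (1 + s * b) * r < sqD := aux_gt s sqD (1 + s * b) r hc hr0 hkey hsqD2 hsqD0
    rw [hV1, div_lt_iff₀ (by positivity : (0:ℝ) < 2 * (1 + s * b))]
    linarith [hgt, (by ring : r * (2 * (1 + s * b)) = 2 * (1 + s * b) * r)]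
  have goal1 : V1 < -b + q := by rw [hrdef] at hV1r; linarith
  have hrq : r ^ 2 + 2 * b * r - 1 = 0 := by rw [hrdef]; linear_combination hq2
  have hnum : -1 + 2 * b * V1 + V1 ^ 2 < 0 := aux_num b r V1 hb hr0 hV1pos hV1r hrq
  have hden : 0 < 1 - b * V1 := aux_den b q V1 hb hq0 hqb hq2 hV1pos (hrdef ▸ hV1r)
  have goal2 : m * (-1 + 2 * b * V1 + V1 ^ 2) / (1 - b * V1) < 0 :=
    div_neg_of_neg_of_pos (mul_neg_of_pos_of_neg hm hnum) hden
  refine ⟨goal1, goal2, ?_⟩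
  -- determinant of M
  have h1bV : (1 - b * V1) ≠ 0 := ne_of_gt hden
  have hUV : U1 * V1 * (1 - b * V1) = m := by
    rw [hU1]; linear_combination (-m) * hquad + (-m * V1 ^ 2) * mul_inv_cancel₀ h1bV
  have hM00 : M 0 0 = -1 - V1 ^ 2 := by rw [hM]; simp
  have hM01 : M 0 1 = -2 * U1 * V1 := by rw [hM]; simp
  have hM10 : M 1 0 = (1 - b * V1) * V1 ^ 2 := by rw [hM]; simp
  have hM11 : M 1 1 = -m + (2 - 3 * b * V1) * U1 * V1 := by rw [hM]; simp
  have hd0 : M.det = (-1 - V1 ^ 2) * (-m + (2 - 3 * b * V1) * U1 * V1)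
      - (-2 * U1 * V1) * ((1 - b * V1) * V1 ^ 2) := by
    rw [Matrix.det_fin_two, hM00, hM01, hM10, hM11]
  have hdet : M.det = m * (-1 + 2 * b * V1 + V1 ^ 2) / (1 - b * V1) := by
    rw [hd0, eq_div_iff h1bV]
    linear_combination (-(2 - 3 * b * V1 - b * V1 ^ 3)) * hUV
  have hdetneg : M.det < 0 := by rw [hdet]; exact goal2
  -- positive eigenvalue
  set t : ℝ := M 0 0 + M 1 1 with htdef
  clear_value t
  have hdiscnn : (0:ℝ) ≤ t ^ 2 - 4 * M.det := aux_disc t M.det hdetneg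
  set S : ℝ := Real.sqrt (t ^ 2 - 4 * M.det) with hSdef
  have hS2 : S ^ 2 = t ^ 2 - 4 * M.det := hSdef ▸ Real.sq_sqrt hdiscnn
  have hS0 : 0 ≤ S := hSdef ▸ Real.sqrt_nonneg _
  clear_value S
  refine ⟨(t + S) / 2, aux_mu t S M.det hdetneg hS2 hS0, ?_⟩
  rw [spectrum.mem_iff]
  intro hunit
  have hdu := (Matrix.isUnit_iff_isUnit_det _).1 hunit
  have hMdet : (algebraMap ℝ (Matrix (Fin 2) (Fin 2) ℝ) ((t + S) / 2) - M).det
      = ((t + S) / 2) ^ 2 - (M 0 0 + M 1 1) * ((t + S) / 2) + M.det := by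
    rw [Matrix.det_fin_two, Matrix.det_fin_two]
    simp only [Matrix.sub_apply, Matrix.algebraMap_matrix_apply, Fin.ext_iff, Fin.val_zero,
      Fin.val_one, if_true, if_false, Algebra.algebraMap_self, RingHom.id_apply]
    norm_num
    ring
  have hzero : ((t + S) / 2) ^ 2 - (M 0 0 + M 1 1) * ((t + S) / 2) + M.det = 0 := by
    rw [← htdef]; linear_combination hS2 / 4
  rw [hMdet, hzero] at hdu
  exact not_isUnit_zero hdu
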